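/- Let k ≥ 1 be an integer, and let x, y ∈ (0,1] with x + ky > 1 and kx + y ≥ 1. Then every graph G that is (x,y)-biconstrained via a tripartition (A,B,C) contains a vertex v ∈ C with |N²_A(v)| ≥ |A|/k. (That is, ψ(x,y) ≥ 1/k.) -/

import Mathlib

open Set

/-- A set of vertices is stable if no two of its members are adjacent. -/
def StableSet {V : Type*} (G : SimpleGraph V) (S : Set V) : Prop :=
  ∀ u ∈ S, ∀ v ∈ S, ¬ G.Adj u v

/-- A tripartition of a graph `G` is a partition of its vertex set into three
nonempty stable sets. -/
def IsTripartition {V : Type*} (G : SimpleGraph V) (A B C : Set V) : Prop :=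
  A.Nonempty ∧ B.Nonempty ∧ C.Nonempty ∧
  Disjoint A B ∧ Disjoint A C ∧ Disjoint B C ∧
  A ∪ B ∪ C = Set.univ ∧
  StableSet G A ∧ StableSet G B ∧ StableSet G C

/-- The number of neighbours of `v` inside the set `S`. -/
noncomputable def nbrCard {V : Type*} (G : SimpleGraph V) (v : V) (S : Set V) : ℕ :=
  (S ∩ G.neighborSet v).ncard

/-- `G` is `(x,y)`-constrained via the tripartition `(A,B,C)`. -/
def Constrained {V : Type*} (G : SimpleGraph V) (x y : ℝ) (A B C : Set V) : Prop :=
  IsTripartition G A B C ∧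
  (∀ v ∈ A, x * B.ncard ≤ (nbrCard G v B : ℝ)) ∧
  (∀ v ∈ B, y * C.ncard ≤ (nbrCard G v C : ℝ)) ∧
  (∀ u ∈ A, ∀ v ∈ C, ¬ G.Adj u v)

/-- `G` is `(x,y)`-biconstrained via the tripartition `(A,B,C)`. -/
def Biconstrained {V : Type*} (G : SimpleGraph V) (x y : ℝ) (A B C : Set V) : Prop :=
  Constrained G x y A B C ∧
  (∀ v ∈ B, x * A.ncard ≤ (nbrCard G v A : ℝ)) ∧
  (∀ v ∈ C, y * B.ncard ≤ (nbrCard G v B : ℝ))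

/-- `N²(v)`: the set of vertices at distance exactly two from `v`. -/
def N2 {V : Type*} (G : SimpleGraph V) (v : V) : Set V :=
  {u | ¬ G.Adj v u ∧ v ≠ u ∧ ∃ w, G.Adj v w ∧ G.Adj w u}

/-- `|N²(v) ∩ A|`. -/
noncomputable def n2card {V : Type*} (G : SimpleGraph V) (v : V) (A : Set V) : ℕ :=
  (N2 G v ∩ A).ncard

lemma ncard_biUnion_le' {V : Type} [Fintype V] (F : Finset V) (T : V → Set V) :
    (⋃ c ∈ F, T c).ncard ≤ ∑ c ∈ F, (T c).ncard := by
  classical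
  induction F using Finset.induction_on with
  | empty => simp
  | @insert a s ha ih =>
      rw [Finset.sum_insert ha, Finset.set_biUnion_insert]
      have h1 := Set.ncard_union_le (T a) (⋃ c ∈ s, T c)
      omega

lemma sum_ncard_le_ncard_biUnion' {V : Type} [Fintype V] (F : Finset V) (T : V → Set V)
    (h : ∀ c ∈ F, ∀ c' ∈ F, c ≠ c' → Disjoint (T c) (T c')) :
    ∑ c ∈ F, (T c).ncard ≤ (⋃ c ∈ F, T c).ncard := by
  classical
  induction F using Finset.induction_on with
  | empty => simp
  | @insert a s ha ih =>
      rw [Finset.sum_insert ha]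
      have hd : Disjoint (T a) (⋃ c ∈ s, T c) := by
        simp only [Set.disjoint_iUnion_right]
        intro i hi
        exact h a (Finset.mem_insert_self a s) i (Finset.mem_insert_of_mem hi)
          (fun he => ha (he ▸ hi))
      rw [Finset.set_biUnion_insert, Set.ncard_union_eq hd (Set.toFinite _) (Set.toFinite _)]
      have ih' := ih (fun c hc c' hc' hne =>
        h c (Finset.mem_insert_of_mem hc) c' (Finset.mem_insert_of_mem hc') hne)
      omega

set_option maxHeartbeats 1000000 in
theorem stmt_9 (k : ℕ) (hk : 1 ≤ k) (x y : ℝ)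
    (hx : x ∈ Set.Ioc (0:ℝ) 1) (hy : y ∈ Set.Ioc (0:ℝ) 1)
    (h1 : 1 < x + k * y) (h2 : 1 ≤ (k : ℝ) * x + y)
    {V : Type} [Fintype V] (G : SimpleGraph V) (A B C : Set V)
    (hG : Biconstrained G x y A B C) :
    ∃ v ∈ C, (A.ncard : ℝ) / k ≤ (n2card G v A : ℝ) := by
  classical
  obtain ⟨hx0, hx1⟩ := hx
  obtain ⟨hy0, hy1⟩ := hy
  obtain ⟨⟨⟨hAne, hBne, hCne, hAB, hAC, hBC, hcov, hAst, hBst, hCst⟩, hAx, hBy, hACe⟩,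
    hBx, hCy⟩ := hG
  by_contra hcon
  push_neg at hcon
  have hA0 : 0 < (A.ncard : ℝ) := by
    exact_mod_cast (Set.ncard_pos A.toFinite).mpr hAne
  have hB0 : 0 < (B.ncard : ℝ) := by
    exact_mod_cast (Set.ncard_pos B.toFinite).mpr hBne
  have hC0 : 0 < (C.ncard : ℝ) := by
    exact_mod_cast (Set.ncard_pos C.toFinite).mpr hCne
  have hkpos : 0 < k := hk
  have hk0 : (0:ℝ) < (k : ℝ) := by exact_mod_cast hkpos
  have hkne : (k:ℝ) ≠ 0 := ne_of_gt hk0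
  set Nb : V → Set V := fun v => B ∩ G.neighborSet v with hNbdef
  have hNbA : ∀ a ∈ A, x * B.ncard ≤ ((Nb a).ncard : ℝ) := fun a ha => hAx a ha
  have hNbC : ∀ c ∈ C, y * B.ncard ≤ ((Nb c).ncard : ℝ) := fun c hc => hCy c hc
  -- the key "hit" lemma : a common B-neighbour puts a in N2(c)
  have hit : ∀ a ∈ A, ∀ c ∈ C, (Nb a ∩ Nb c).Nonempty → a ∈ N2 G c ∩ A := by
    rintro a ha c hc ⟨b, ⟨hbB, hba⟩, ⟨-, hbc⟩⟩
    have hba' : G.Adj a b := hba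
    have hbc' : G.Adj c b := hbc
    refine ⟨⟨fun h => hACe a ha c hc h.symm, ?_, b, hbc', hba'.symm⟩, ha⟩
    rintro rfl
    exact (Set.disjoint_left.mp hAC ha) hc
  -- A-neighbours of any b ∈ Nb c lie in N2(c) ∩ A
  have hnbA : ∀ c ∈ C, ∀ b ∈ Nb c, ∀ a ∈ A ∩ G.neighborSet b, a ∈ N2 G c ∩ A := by
    rintro c hc b hb a ⟨haA, hab⟩
    have hab' : G.Adj b a := hab
    exact hit a haA c hc ⟨b, ⟨hb.1, hab'.symm⟩, hb⟩
  have hNbne : ∀ a ∈ A, (Nb a).Nonempty := by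
    intro a ha
    apply Set.nonempty_of_ncard_ne_zero
    have h1' : (0:ℝ) < ((Nb a).ncard : ℝ) :=
      lt_of_lt_of_le (mul_pos hx0 hB0) (hNbA a ha)
    intro h0
    rw [h0] at h1'; simp at h1'
  have hNbneC : ∀ c ∈ C, (Nb c).Nonempty := by
    intro c hc
    apply Set.nonempty_of_ncard_ne_zero
    have h1' : (0:ℝ) < ((Nb c).ncard : ℝ) :=
      lt_of_lt_of_le (mul_pos hy0 hB0) (hNbC c hc)
    intro h0
    rw [h0] at h1'; simp at h1'
  -- choose a maximum-cardinality family F of ≤ k-1 vertices of C with pairwise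
  -- disjoint B-neighbourhoods
  set P : Finset V → Prop := fun F => ↑F ⊆ C ∧ F.card ≤ k - 1 ∧
      ∀ c ∈ F, ∀ c' ∈ F, c ≠ c' → Disjoint (Nb c) (Nb c') with hPdef
  have hPempty : P ∅ := ⟨by simp, by simp, by simp⟩
  obtain ⟨F, hFmem, hFmax⟩ := Finset.exists_max_image
      ((Finset.univ : Finset (Finset V)).filter P) Finset.card
      ⟨∅, Finset.mem_filter.mpr ⟨Finset.mem_univ _, hPempty⟩⟩
  obtain ⟨hFC, hFk, hFdisj⟩ := (Finset.mem_filter.mp hFmem).2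
  set Z : Set V := ⋃ c ∈ F, (N2 G c ∩ A) with hZdef
  have hZsum : (Z.ncard : ℝ) ≤ ((k:ℝ) - 1) * ((A.ncard : ℝ) / k) := by
    have hb1 : (Z.ncard : ℝ) ≤ ∑ c ∈ F, ((N2 G c ∩ A).ncard : ℝ) := by
      have h := ncard_biUnion_le' F (fun c => N2 G c ∩ A)
      calc (Z.ncard : ℝ) ≤ ((∑ c ∈ F, (N2 G c ∩ A).ncard : ℕ) : ℝ) := by exact_mod_cast h
        _ = ∑ c ∈ F, ((N2 G c ∩ A).ncard : ℝ) := by push_cast; ring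
    have hb2 : ∑ c ∈ F, ((N2 G c ∩ A).ncard : ℝ) ≤ F.card • ((A.ncard:ℝ)/k) :=
      Finset.sum_le_card_nsmul F _ _ (fun c hcF => le_of_lt (hcon c (hFC hcF)))
    have hb3 : (F.card : ℝ) ≤ (k:ℝ) - 1 := by
      have hc' : (F.card:ℝ) ≤ ((k-1 : ℕ):ℝ) := by exact_mod_cast hFk
      rwa [Nat.cast_sub hk, Nat.cast_one] at hc'
    have hb4 : (0:ℝ) ≤ (A.ncard:ℝ)/k := le_of_lt (div_pos hA0 hk0)
    calc (Z.ncard : ℝ) ≤ F.card • ((A.ncard:ℝ)/k) := hb1.trans hb2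
      _ = (F.card : ℝ) * ((A.ncard:ℝ)/k) := by rw [nsmul_eq_mul]
      _ ≤ ((k:ℝ) - 1) * ((A.ncard:ℝ)/k) := mul_le_mul_of_nonneg_right hb3 hb4
  -- every c ∈ C shares a B-neighbour with some member of F
  have hdom : ∀ c ∈ C, ∃ c' ∈ F, (Nb c ∩ Nb c').Nonempty := by
    intro c hc
    by_contra hno
    push_neg at hno
    have hno' : ∀ c' ∈ F, Disjoint (Nb c) (Nb c') := fun c' hc' =>
      Set.disjoint_iff_inter_eq_empty.mpr (hno c' hc')
    rcases lt_or_eq_of_le hFk with hlt | heq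
    · -- F can be enlarged, contradicting maximality
      have hcF : c ∉ F := by
        intro hcF
        have hce := hno c hcF
        rw [Set.inter_self] at hce
        exact (Set.nonempty_iff_ne_empty.mp (hNbneC c hc)) hce
      have hPins : P (insert c F) := by
        refine ⟨?_, ?_, ?_⟩
        · intro v hv
          rw [Finset.coe_insert] at hv
          rcases hv with rfl | hv
          · exact hc
          · exact hFC hv
        · rw [Finset.card_insert_of_notMem hcF]; omega
        · intro c1 h1 c2 h2 hne
          rcases Finset.mem_insert.mp h1 with rfl | h1' <;>
            rcases Finset.mem_insert.mp h2 with rfl | h2'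
          · exact absurd rfl hne
          · exact hno' c2 h2'
          · exact (hno' c1 h1').symm
          · exact hFdisj c1 h1' c2 h2' hne
      have := hFmax (insert c F) (Finset.mem_filter.mpr ⟨Finset.mem_univ _, hPins⟩)
      rw [Finset.card_insert_of_notMem hcF] at this
      omega
    · -- |F| = k-1 : measure argument using x + ky > 1
      set U : Set V := ⋃ c' ∈ F, Nb c' with hUdef
      have hUB : U ⊆ B := by
        intro b hb
        obtain ⟨c', hc', hbc'⟩ := Set.mem_iUnion₂.mp hb
        exact hbc'.1
      have hUcard : ((k:ℝ) - 1) * (y * B.ncard) ≤ (U.ncard : ℝ) := by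
        have hsum := sum_ncard_le_ncard_biUnion' F Nb hFdisj
        have hb1 : ∑ c' ∈ F, (y * (B.ncard:ℝ)) ≤ ∑ c' ∈ F, ((Nb c').ncard : ℝ) :=
          Finset.sum_le_sum (fun c' hc' => hNbC c' (hFC hc'))
        have hcc : (F.card : ℝ) = (k:ℝ) - 1 := by
          rw [heq, Nat.cast_sub hk, Nat.cast_one]
        calc ((k:ℝ)-1) * (y * B.ncard) = (F.card:ℝ) * (y * B.ncard) := by rw [hcc]
          _ = ∑ _c' ∈ F, (y * (B.ncard:ℝ)) := by
              rw [Finset.sum_const, nsmul_eq_mul]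
          _ ≤ ∑ c' ∈ F, ((Nb c').ncard : ℝ) := hb1
          _ = ((∑ c' ∈ F, (Nb c').ncard : ℕ) : ℝ) := by push_cast; ring
          _ ≤ (U.ncard : ℝ) := by exact_mod_cast hsum
      have hDcard : ((B \ U).ncard : ℝ) = (B.ncard : ℝ) - U.ncard :=
        Set.cast_ncard_sdiff hUB B.toFinite
      have hAZsub : A \ Z ⊆ N2 G c ∩ A := by
        rintro a ⟨haA, haZ⟩
        have hSa : Nb a ⊆ B \ U := by
          intro b hb
          refine ⟨hb.1, fun hbU => ?_⟩
          obtain ⟨c', hc', hbc'⟩ := Set.mem_iUnion₂.mp hbU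
          have hab : G.Adj a b := hb.2
          have hmem : a ∈ N2 G c' ∩ A :=
            hnbA c' (hFC hc') b hbc' a ⟨haA, hab.symm⟩
          exact haZ (Set.mem_iUnion₂.mpr ⟨c', hc', hmem⟩)
        have hTc : Nb c ⊆ B \ U := by
          intro b hb
          refine ⟨hb.1, fun hbU => ?_⟩
          obtain ⟨c', hc', hbc'⟩ := Set.mem_iUnion₂.mp hbU
          exact (Set.disjoint_left.mp (hno' c' hc') hb) hbc'
        have hne' : (Nb a ∩ Nb c).Nonempty := by
          by_contra hdis
          rw [Set.not_nonempty_iff_eq_empty] at hdis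
          have hdisj : Disjoint (Nb a) (Nb c) := Set.disjoint_iff_inter_eq_empty.mpr hdis
          have hcard : ((Nb a).ncard : ℝ) + ((Nb c).ncard : ℝ) ≤ ((B\U).ncard : ℝ) := by
            have he := Set.ncard_union_eq hdisj (Set.toFinite _) (Set.toFinite _)
            have hsub : Nb a ∪ Nb c ⊆ B \ U := Set.union_subset hSa hTc
            have hle := Set.ncard_le_ncard hsub (Set.toFinite _)
            rw [he] at hle
            exact_mod_cast hle
          have hA' := hNbA a haA
          have hC' := hNbC c hc
          rw [hDcard] at hcard
          nlinarith [mul_pos (sub_pos.mpr h1) hB0]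
        exact hit a haA c hc hne'
      have hge : ((A \ Z).ncard : ℝ) ≤ ((N2 G c ∩ A).ncard : ℝ) := by
        exact_mod_cast Set.ncard_le_ncard hAZsub (Set.toFinite _)
      have hAle : (A.ncard : ℝ) ≤ ((A\Z).ncard : ℝ) + (Z.ncard : ℝ) := by
        exact_mod_cast Set.ncard_le_ncard_diff_add_ncard A Z (Set.toFinite _)
      have hfin : ((N2 G c ∩ A).ncard : ℝ) < (A.ncard:ℝ)/k := hcon c hc
      have hdiv : ((k:ℝ)-1) * ((A.ncard:ℝ)/k) = (A.ncard:ℝ) - (A.ncard:ℝ)/k := by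
        field_simp
      linarith [hZsum]
  obtain ⟨c0, hc0⟩ := hCne
  -- the double count : some c ∈ C sees at least y|A\Z| vertices of A\Z at distance 2
  set Cf : Finset V := C.toFinite.toFinset with hCfdef
  set Af : Finset V := (A \ Z).toFinite.toFinset with hAfdef
  have hCfcard : (Cf.card : ℝ) = (C.ncard : ℝ) := by
    rw [hCfdef]; exact_mod_cast (Set.ncard_eq_toFinset_card C C.toFinite).symm
  have hAfcard : (Af.card : ℝ) = ((A\Z).ncard : ℝ) := by
    rw [hAfdef]; exact_mod_cast (Set.ncard_eq_toFinset_card (A\Z) (A\Z).toFinite).symm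
  have hswap : ∑ c ∈ Cf, (((N2 G c ∩ A) \ Z).ncard : ℝ)
      = ∑ a ∈ Af, ((C ∩ {c | a ∈ N2 G c}).ncard : ℝ) := by
    have e1 : ∀ c : V, ((N2 G c ∩ A) \ Z).ncard
        = (Af.filter (fun a => a ∈ N2 G c)).card := by
      intro c
      rw [← Set.ncard_coe_finset]
      congr 1
      ext a
      simp only [Set.mem_diff, Set.mem_inter_iff, Finset.coe_filter, Set.mem_setOf_eq,
        hAfdef, Set.Finite.mem_toFinset]
      tauto
    have e2 : ∀ a : V, (C ∩ {c | a ∈ N2 G c}).ncard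
        = (Cf.filter (fun c => a ∈ N2 G c)).card := by
      intro a
      rw [← Set.ncard_coe_finset]
      congr 1
      ext c
      simp only [Set.mem_inter_iff, Set.mem_setOf_eq, Finset.coe_filter,
        hCfdef, Set.Finite.mem_toFinset]
    simp only [e1, e2]
    have hnat : ∑ c ∈ Cf, (Af.filter (fun a => a ∈ N2 G c)).card
        = ∑ a ∈ Af, (Cf.filter (fun c => a ∈ N2 G c)).card := by
      simp only [Finset.card_filter]
      exact Finset.sum_comm
    exact_mod_cast congrArg (fun n : ℕ => (n:ℝ)) hnat
  have hpera : ∀ a ∈ A, y * (C.ncard:ℝ) ≤ ((C ∩ {c | a ∈ N2 G c}).ncard : ℝ) := by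
    intro a ha
    obtain ⟨b, hb⟩ := hNbne a ha
    have hsub : C ∩ G.neighborSet b ⊆ C ∩ {c | a ∈ N2 G c} := by
      rintro c ⟨hcC, hcb⟩
      refine ⟨hcC, ?_⟩
      have hbc : G.Adj b c := hcb
      exact (hit a ha c hcC ⟨b, hb, ⟨hb.1, hbc.symm⟩⟩).1
    calc y * (C.ncard:ℝ) ≤ (nbrCard G b C : ℝ) := hBy b hb.1
      _ ≤ _ := by exact_mod_cast Set.ncard_le_ncard hsub (Set.toFinite _)
  have hsumlb : y * (C.ncard:ℝ) * (((A\Z).ncard):ℝ)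
      ≤ ∑ c ∈ Cf, (((N2 G c ∩ A) \ Z).ncard : ℝ) := by
    rw [hswap]
    have hss : ∑ _a ∈ Af, y * (C.ncard:ℝ) ≤ ∑ a ∈ Af, ((C ∩ {c | a ∈ N2 G c}).ncard : ℝ) :=
      Finset.sum_le_sum (fun a haf => hpera a (((A\Z).toFinite.mem_toFinset.mp haf).1))
    rw [Finset.sum_const, nsmul_eq_mul] at hss
    calc y * (C.ncard:ℝ) * (((A\Z).ncard):ℝ) = (Af.card:ℝ) * (y * (C.ncard:ℝ)) := by
          rw [hAfcard]; ring
      _ ≤ _ := hss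
  have hCfne : Cf.Nonempty := ⟨c0, C.toFinite.mem_toFinset.mpr hc0⟩
  have hex : ∃ c ∈ Cf, y * (((A\Z).ncard):ℝ) ≤ (((N2 G c ∩ A) \ Z).ncard : ℝ) := by
    by_contra hno
    push_neg at hno
    have hlt := Finset.sum_lt_sum_of_nonempty hCfne hno
    rw [Finset.sum_const, nsmul_eq_mul, hCfcard] at hlt
    have : (C.ncard:ℝ) * (y * (((A\Z).ncard):ℝ)) = y * (C.ncard:ℝ) * (((A\Z).ncard):ℝ) := by
      ring
    linarith [hsumlb]
  obtain ⟨c, hcCf, hclb⟩ := hex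
  have hcC : c ∈ C := C.toFinite.mem_toFinset.mp hcCf
  obtain ⟨c', hc'F, b, hb⟩ := hdom c hcC
  -- |N2(c) ∩ A ∩ Z| ≥ x |A|
  have hxZ : x * (A.ncard:ℝ) ≤ (((N2 G c ∩ A) ∩ Z).ncard : ℝ) := by
    have hsub : A ∩ G.neighborSet b ⊆ (N2 G c ∩ A) ∩ Z := by
      intro a ha'
      refine ⟨hnbA c hcC b hb.1 a ha', ?_⟩
      exact Set.mem_iUnion₂.mpr ⟨c', hc'F, hnbA c' (hFC hc'F) b hb.2 a ha'⟩
    calc x * (A.ncard:ℝ) ≤ (nbrCard G b A : ℝ) := hBx b hb.1.1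
      _ ≤ _ := by exact_mod_cast Set.ncard_le_ncard hsub (Set.toFinite _)
  have hsplit : (((N2 G c ∩ A) ∩ Z).ncard : ℝ) + (((N2 G c ∩ A) \ Z).ncard : ℝ)
      ≤ (n2card G c A : ℝ) := by
    have he := Set.ncard_inter_add_ncard_diff_eq_ncard (N2 G c ∩ A) Z (Set.toFinite _)
    exact_mod_cast he.le
  have hAZlb : (A.ncard:ℝ) - (Z.ncard:ℝ) ≤ (((A\Z).ncard):ℝ) := by
    have h' : (A.ncard:ℝ) ≤ (((A\Z).ncard):ℝ) + (Z.ncard:ℝ) := by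
      exact_mod_cast Set.ncard_le_ncard_diff_add_ncard A Z (Set.toFinite _)
    linarith
  have hconc : (n2card G c A : ℝ) < (A.ncard:ℝ)/k := hcon c hcC
  have hyz : y * (Z.ncard:ℝ) ≤ y * (((k:ℝ)-1) * ((A.ncard:ℝ)/k)) :=
    mul_le_mul_of_nonneg_left hZsum hy0.le
  have hym : y * ((A.ncard:ℝ) - (Z.ncard:ℝ)) ≤ y * (((A\Z).ncard):ℝ) :=
    mul_le_mul_of_nonneg_left hAZlb hy0.le
  have e2 : ((k:ℝ)-1) * ((A.ncard:ℝ)/k) = (A.ncard:ℝ) - (A.ncard:ℝ)/k := by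
    field_simp
  have e4 : y * ((A.ncard:ℝ) - (A.ncard:ℝ)/k)
      = y*(A.ncard:ℝ) - y*((A.ncard:ℝ)/k) := by ring
  have e5 : y * ((A.ncard:ℝ) - (Z.ncard:ℝ)) = y*(A.ncard:ℝ) - y*(Z.ncard:ℝ) := by ring
  have hkey : x * (A.ncard:ℝ) + y * ((A.ncard:ℝ)/k) < (A.ncard:ℝ)/k := by
    rw [e2, e4] at hyz
    linarith [hxZ, hclb, hsplit, hconc, hym, e5]
  have e3 : x*(A.ncard:ℝ) = x*(k:ℝ)*((A.ncard:ℝ)/k) := by field_simp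
  have hq0 : 0 < (A.ncard:ℝ)/k := div_pos hA0 hk0
  nlinarith [hkey, e3, hq0, h2, mul_nonneg hq0.le (by linarith : (0:ℝ) ≤ (k:ℝ)*x + y - 1)]
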